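/- For every positive semidefinite real symmetric m×m matrix M, the matrix D − (1/m)M is positive semidefinite, where D is the diagonal matrix with the same diagonal entries as M; that is, for all z ∈ ℝ^m, Σ_{l=1}^m z_l² M_{ll} − (1/m) Σ_{u=1}^m Σ_{v=1}^m z_u z_v M_{uv} ≥ 0. -/

import Mathlib

open Matrix

lemma key_ineq {m : ℕ} (M : Matrix (Fin m) (Fin m) ℝ) (hM : M.PosSemidef)
    (z : Fin m → ℝ) (u v : Fin m) :
    z u * z v * M u v ≤ (z u ^ 2 * M u u + z v ^ 2 * M v v) / 2 := by
  have hsym : M v u = M u v := by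
    have h1 := hM.1
    rw [Matrix.IsHermitian] at h1
    calc M v u = Mᴴ u v := by simp [Matrix.conjTranspose_apply]
      _ = M u v := by rw [h1]
  have h := hM.dotProduct_mulVec_nonneg (Pi.single u (z u) - Pi.single v (z v))
  simp only [star_trivial, Matrix.mulVec_sub, Matrix.mulVec_single,
    dotProduct_sub, sub_dotProduct, single_dotProduct,
    dotProduct, Pi.sub_apply, Pi.single_apply] at h
  simp only [sub_mul, ite_mul, zero_mul, Finset.sum_sub_distrib,
    Finset.sum_ite_eq', Finset.mem_univ, if_true, Pi.smul_apply, Matrix.col_apply, op_smul_eq_mul] at h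
  rw [hsym] at h
  nlinarith [h]

theorem diagonal_sub_avg_posSemidef
    (m : ℕ) (hm : 1 ≤ m)
    (M : Matrix (Fin m) (Fin m) ℝ) (hM : M.PosSemidef)
    (z : Fin m → ℝ) :
    0 ≤ ∑ l, z l ^ 2 * M l l - (1 / (m : ℝ)) * ∑ u, ∑ v, z u * z v * M u v := by
  have hm0 : (0 : ℝ) < m := by exact_mod_cast hm
  have hS : ∑ u, ∑ v, z u * z v * M u v ≤ (m : ℝ) * ∑ l, z l ^ 2 * M l l := by
    calc ∑ u, ∑ v, z u * z v * M u v
        ≤ ∑ u, ∑ v, (z u ^ 2 * M u u + z v ^ 2 * M v v) / 2 := by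
          apply Finset.sum_le_sum; intro u _
          apply Finset.sum_le_sum; intro v _
          exact key_ineq M hM z u v
      _ = (m : ℝ) * ∑ l, z l ^ 2 * M l l := by
          simp [Finset.sum_add_distrib, Finset.sum_div, Finset.sum_const,
            Finset.card_univ, nsmul_eq_mul, ← Finset.sum_div, Finset.mul_sum]
  rw [sub_nonneg, div_mul_eq_mul_div, one_mul, div_le_iff₀ hm0]
  linarith [hS]
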